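/- arXiv:2410.08796 — 5 statements merged into one kernel-verified Lean document; each statement's English description precedes it below -/
import Mathlib

section
/- With C̄ positive definite, V a d'×r matrix, Σ_C positive definite, Σ = Σ_C⁻¹ + Vᵀ C̄⁻¹ V, C̃ = C̄ + V Σ_C Vᵀ, and P = C̄⁻¹ V Σ⁻¹ Vᵀ, one has (I − P) C̄⁻¹ (I − P)ᵀ + C̄⁻¹ V Σ⁻¹ Σ_C⁻¹ Σ⁻¹ Vᵀ C̄⁻¹ = C̃⁻¹. -/
open Matrix

theorem stmt_11 {d' r : ℕ} (Cbar : Matrix (Fin d') (Fin d') ℝ)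
    (V : Matrix (Fin d') (Fin r) ℝ) (Sc : Matrix (Fin r) (Fin r) ℝ)
    (hC : Cbar.PosDef) (hSc : Sc.PosDef)
    (Ct : Matrix (Fin d') (Fin d') ℝ) (hCt : Ct = Cbar + V * Sc * Vᵀ)
    (Sm : Matrix (Fin r) (Fin r) ℝ) (hSm : Sm = Sc⁻¹ + Vᵀ * Cbar⁻¹ * V)
    (P : Matrix (Fin d') (Fin d') ℝ) (hP : P = Cbar⁻¹ * V * Sm⁻¹ * Vᵀ) :
    (1 - P) * Cbar⁻¹ * (1 - P)ᵀ +
        Cbar⁻¹ * V * Sm⁻¹ * Sc⁻¹ * Sm⁻¹ * Vᵀ * Cbar⁻¹ = Ct⁻¹ := by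
  have hSmPD : Sm.PosDef := by
    rw [hSm]
    refine hSc.inv.add_posSemidef ?_
    simpa using hC.inv.posSemidef.conjTranspose_mul_mul_same V
  set A := Cbar⁻¹ with hAdef
  set S := Sm⁻¹ with hSdef
  set T := Sc⁻¹ with hTdef
  -- inverse facts
  have hCA : Cbar * A = 1 := mul_nonsing_inv _ (isUnit_iff_isUnit_det _ |>.mp hC.isUnit)
  have hSSm : S * Sm = 1 := nonsing_inv_mul _ (isUnit_iff_isUnit_det _ |>.mp hSmPD.isUnit)
  have hSmS : Sm * S = 1 := mul_nonsing_inv _ (isUnit_iff_isUnit_det _ |>.mp hSmPD.isUnit)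
  have hScT : Sc * T = 1 := mul_nonsing_inv _ (isUnit_iff_isUnit_det _ |>.mp hSc.isUnit)
  -- symmetry facts
  have hAT : Aᵀ = A := by
    have := hC.isHermitian.inv.eq
    simpa [Matrix.conjTranspose_eq_transpose_of_trivial, hAdef] using this
  have hST : Sᵀ = S := by
    have := hSmPD.isHermitian.inv.eq
    simpa [Matrix.conjTranspose_eq_transpose_of_trivial, hSdef] using this
  have key : Vᵀ * A * V = Sm - T := by rw [hSm]; abel
  -- the candidate inverse
  have hX : Ct * (A - A * V * S * Vᵀ * A) = 1 := by
    rw [hCt]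
    have e1 : (Cbar + V * Sc * Vᵀ) * (A - A * V * S * Vᵀ * A)
        = Cbar * A - Cbar * A * (V * S * Vᵀ * A)
          + V * Sc * (Vᵀ * A) - V * Sc * (Vᵀ * A * V) * (S * (Vᵀ * A)) := by
      simp only [Matrix.mul_sub, Matrix.sub_mul, Matrix.mul_add, Matrix.add_mul,
        Matrix.mul_one, Matrix.one_mul, Matrix.mul_assoc]
      abel
    rw [e1, hCA, key]
    have e2 : V * Sc * (Sm - T) * (S * (Vᵀ * A))
        = V * (Sc * (Sm * S)) * (Vᵀ * A) - V * (Sc * T) * (S * (Vᵀ * A)) := by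
      simp only [Matrix.mul_sub, Matrix.sub_mul, Matrix.mul_assoc]
    rw [e2, hSmS, hScT]
    simp only [Matrix.mul_one, Matrix.one_mul, Matrix.mul_assoc]
    abel
  have hCtinv : Ct⁻¹ = A - A * V * S * Vᵀ * A := inv_eq_right_inv hX
  rw [hCtinv, hP]
  have htr : (1 - A * V * S * Vᵀ)ᵀ = 1 - V * S * Vᵀ * A := by
    simp [Matrix.transpose_sub, Matrix.transpose_mul, hAT, hST, Matrix.mul_assoc]
  rw [htr]
  have e3 : (1 - A * V * S * Vᵀ) * A * (1 - V * S * Vᵀ * A) + A * V * S * T * S * Vᵀ * A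
      = A - A * V * S * (Vᵀ * A) - A * V * (S * (Vᵀ * A))
        + A * V * S * (Vᵀ * A * V) * (S * (Vᵀ * A)) + A * V * (S * T * S) * (Vᵀ * A) := by
    simp only [Matrix.mul_sub, Matrix.sub_mul, Matrix.mul_add, Matrix.add_mul,
      Matrix.mul_one, Matrix.one_mul, Matrix.mul_assoc]
    abel
  rw [e3, key]
  have e4 : A * V * S * (Sm - T) * (S * (Vᵀ * A))
      = A * V * ((S * Sm) * S) * (Vᵀ * A) - A * V * (S * T * S) * (Vᵀ * A) := by
    simp only [Matrix.mul_sub, Matrix.sub_mul, Matrix.mul_assoc]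
  rw [e4, hSSm]
  simp only [Matrix.mul_one, Matrix.one_mul, Matrix.mul_assoc]
  abel
end

section
/- Marginal prior correctness for CAGP: if f(X) has covariance K with itself, ζ ~ N(0, σ²G⁻²) independent of f where G = K + σ²I, and v = G⁻¹(f(X) − m₀(X)) + ζ, then v ~ N(0, G⁻¹). -/
open Matrix MeasureTheory

/-- Cross-covariance matrix of two random vectors. -/
noncomputable def cov {Ω : Type*} [MeasurableSpace Ω] (μ : Measure Ω)
    {n m : Type*} (X : Ω → n → ℝ) (Y : Ω → m → ℝ) : Matrix n m ℝ :=
  Matrix.of fun i j =>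
    ∫ ω, (X ω i - ∫ ω', X ω' i ∂μ) * (Y ω j - ∫ ω', Y ω' j ∂μ) ∂μ

lemma int_mul {Ω : Type*} [MeasurableSpace Ω] {μ : Measure Ω} [IsProbabilityMeasure μ]
    {f g : Ω → ℝ} (hf : MemLp f 2 μ) (hg : MemLp g 2 μ) :
    Integrable (fun ω => f ω * g ω) μ := by
  have h : MemLp (f • g) 1 μ :=
    hg.smul hf
  have h2 := memLp_one_iff_integrable.mp h
  exact h2

/-- Marginal prior correctness for CAGP: with `w = f(X) - m₀(X)` having mean `0` and
covariance `K`, and `ζ` a mean-zero noise with covariance `σ² G⁻²` uncorrelated with `w`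
(e.g. independent of `f`), the vector `v = G⁻¹ w + ζ` has mean `0` and covariance `G⁻¹`. -/
theorem stmt_14 {Ω : Type*} [MeasurableSpace Ω] (μ : Measure Ω)
    [IsProbabilityMeasure μ] {d : ℕ}
    (w ζ : Ω → Fin d → ℝ)
    (hw2 : ∀ i, MemLp (fun ω => w ω i) 2 μ)
    (hζ2 : ∀ i, MemLp (fun ω => ζ ω i) 2 μ)
    (K G : Matrix (Fin d) (Fin d) ℝ) (σ : ℝ) (hσ : 0 < σ)
    (hK : K.PosSemidef) (hG : G = K + σ ^ 2 • (1 : Matrix (Fin d) (Fin d) ℝ))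
    (hwmean : ∀ i, ∫ ω, w ω i ∂μ = 0)
    (hζmean : ∀ i, ∫ ω, ζ ω i ∂μ = 0)
    (hwcov : cov μ w w = K)
    (hζcov : cov μ ζ ζ = σ ^ 2 • (G⁻¹ * G⁻¹))
    (hindep : cov μ w ζ = 0)
    (v : Ω → Fin d → ℝ) (hv : ∀ ω, v ω = G⁻¹.mulVec (w ω) + ζ ω) :
    (∀ i, ∫ ω, v ω i ∂μ = 0) ∧ cov μ v v = G⁻¹ := by
  -- matrix facts
  have hsm : (σ ^ 2 • (1 : Matrix (Fin d) (Fin d) ℝ)).PosDef := by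
    exact Matrix.PosDef.one.smul (pow_pos hσ 2)
  have hGpd : G.PosDef := hG ▸ (Matrix.PosDef.posSemidef_add hK hsm)
  have hGdet : IsUnit G.det := hGpd.det_pos.ne'.isUnit
  have hGH : G.IsHermitian := hGpd.isHermitian
  have hAH : (G⁻¹).IsHermitian := hGH.inv
  have hAsym : ∀ i j, G⁻¹ i j = G⁻¹ j i := by
    intro i j
    have := congrFun (congrFun hAH.eq j) i
    simpa [Matrix.conjTranspose_apply] using this
  -- integrabilities
  have hwint : ∀ i, Integrable (fun ω => w ω i) μ := fun i => (hw2 i).integrable one_le_two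
  have hζint : ∀ i, Integrable (fun ω => ζ ω i) μ := fun i => (hζ2 i).integrable one_le_two
  have hS2 : ∀ i, MemLp (fun ω => ∑ k, G⁻¹ i k * w ω k) 2 μ := fun i =>
    memLp_finset_sum Finset.univ (fun k _ => (hw2 k).const_mul _)
  have hvi : ∀ ω i, v ω i = (∑ k, G⁻¹ i k * w ω k) + ζ ω i := by
    intro ω i
    rw [hv]
    simp [Matrix.mulVec, dotProduct]
  -- means
  have hmean : ∀ i, ∫ ω, v ω i ∂μ = 0 := by
    intro i
    simp only [hvi]
    rw [integral_add (integrable_finset_sum _ fun k _ => (hwint k).const_mul _) (hζint i),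
      integral_finset_sum _ fun k _ => (hwint k).const_mul _]
    simp [integral_const_mul, hwmean, hζmean]
  refine ⟨hmean, ?_⟩
  -- integral identities from covariance hypotheses
  have hKint : ∀ k l, ∫ ω, w ω k * w ω l ∂μ = K k l := by
    intro k l
    have := congrFun (congrFun hwcov k) l
    simpa [cov, hwmean] using this
  have hwζint : ∀ k j, ∫ ω, w ω k * ζ ω j ∂μ = 0 := by
    intro k j
    have := congrFun (congrFun hindep k) j
    simpa [cov, hwmean, hζmean] using this
  have hζζint : ∀ i j, ∫ ω, ζ ω i * ζ ω j ∂μ = σ ^ 2 * (G⁻¹ * G⁻¹) i j := by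
    intro i j
    have := congrFun (congrFun hζcov i) j
    simpa [cov, hζmean, Matrix.smul_apply, smul_eq_mul] using this
  -- the matrix identity
  have hmat : G⁻¹ * K * G⁻¹ + σ ^ 2 • (G⁻¹ * G⁻¹) = G⁻¹ := by
    have h1 : G⁻¹ * K * G⁻¹ + σ ^ 2 • (G⁻¹ * G⁻¹) = G⁻¹ * G * G⁻¹ := by
      rw [hG, Matrix.mul_add, Matrix.add_mul]
      congr 1
      simp [Matrix.mul_smul, Matrix.smul_mul, Matrix.mul_one]
    rw [h1, Matrix.nonsing_inv_mul G hGdet, Matrix.one_mul]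
  have key : ∀ i j, (G⁻¹ * K * G⁻¹) i j = ∑ k, ∑ l, G⁻¹ i k * G⁻¹ j l * K k l := by
    intro i j
    rw [Matrix.mul_apply]
    simp_rw [Matrix.mul_apply, Finset.sum_mul]
    rw [Finset.sum_comm]
    refine Finset.sum_congr rfl fun k _ => Finset.sum_congr rfl fun l _ => ?_
    rw [hAsym l j]; ring
  -- covariance computation
  ext i j
  have hint1 : Integrable (fun ω => (∑ k, G⁻¹ i k * w ω k) * (∑ l, G⁻¹ j l * w ω l)) μ :=
    int_mul (hS2 i) (hS2 j)
  have hint2 : Integrable (fun ω => (∑ k, G⁻¹ i k * w ω k) * ζ ω j) μ :=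
    int_mul (hS2 i) (hζ2 j)
  have hint3 : Integrable (fun ω => ζ ω i * (∑ l, G⁻¹ j l * w ω l)) μ :=
    int_mul (hζ2 i) (hS2 j)
  have hint4 : Integrable (fun ω => ζ ω i * ζ ω j) μ := int_mul (hζ2 i) (hζ2 j)
  show (∫ ω, (v ω i - ∫ ω', v ω' i ∂μ) * (v ω j - ∫ ω', v ω' j ∂μ) ∂μ) = G⁻¹ i j
  simp only [hmean, sub_zero]
  have expand : ∀ ω, v ω i * v ω j =
      (∑ k, G⁻¹ i k * w ω k) * (∑ l, G⁻¹ j l * w ω l)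
      + (∑ k, G⁻¹ i k * w ω k) * ζ ω j
      + (ζ ω i * (∑ l, G⁻¹ j l * w ω l) + ζ ω i * ζ ω j) := by
    intro ω
    rw [hvi ω i, hvi ω j]; ring
  rw [integral_congr_ae (Filter.Eventually.of_forall expand)]
  have hint12 : Integrable (fun ω => (∑ k, G⁻¹ i k * w ω k) * (∑ l, G⁻¹ j l * w ω l)
      + (∑ k, G⁻¹ i k * w ω k) * ζ ω j) μ := hint1.add hint2
  have hint34 : Integrable (fun ω => ζ ω i * (∑ l, G⁻¹ j l * w ω l) + ζ ω i * ζ ω j) μ :=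
    hint3.add hint4
  rw [integral_add hint12 hint34, integral_add hint1 hint2, integral_add hint3 hint4]
  -- term 1
  have t1 : (∫ ω, (∑ k, G⁻¹ i k * w ω k) * (∑ l, G⁻¹ j l * w ω l) ∂μ)
      = (G⁻¹ * K * G⁻¹) i j := by
    rw [key i j]
    simp_rw [Finset.sum_mul_sum]
    rw [integral_finset_sum _ fun k _ => integrable_finset_sum _
      fun l _ => int_mul ((hw2 k).const_mul _) ((hw2 l).const_mul _)]
    refine Finset.sum_congr rfl fun k _ => ?_
    rw [integral_finset_sum _ fun l _ => int_mul ((hw2 k).const_mul _) ((hw2 l).const_mul _)]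
    refine Finset.sum_congr rfl fun l _ => ?_
    rw [← hKint k l, ← integral_const_mul]
    exact integral_congr_ae (Filter.Eventually.of_forall fun ω => by ring)
  -- term 2
  have t2 : (∫ ω, (∑ k, G⁻¹ i k * w ω k) * ζ ω j ∂μ) = 0 := by
    simp_rw [Finset.sum_mul, mul_assoc]
    rw [integral_finset_sum _ fun k _ => (int_mul (hw2 k) (hζ2 j)).const_mul _]
    simp [integral_const_mul, hwζint]
  -- term 3
  have t3 : (∫ ω, ζ ω i * (∑ l, G⁻¹ j l * w ω l) ∂μ) = 0 := by
    simp_rw [Finset.mul_sum]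
    rw [integral_finset_sum _ fun l _ => int_mul (hζ2 i) ((hw2 l).const_mul _)]
    have h0 : ∀ l, ∫ ω, ζ ω i * (G⁻¹ j l * w ω l) ∂μ = 0 := by
      intro l
      have : ∫ ω, ζ ω i * (G⁻¹ j l * w ω l) ∂μ = G⁻¹ j l * ∫ ω, w ω l * ζ ω i ∂μ := by
        rw [← integral_const_mul]
        exact integral_congr_ae (Filter.Eventually.of_forall fun ω => by ring)
      rw [this, hwζint l i, mul_zero]
    simp [h0]
  rw [t1, t2, t3, hζζint]
  have := congrFun (congrFun hmat i) j
  simpa [Matrix.add_apply, Matrix.smul_apply, smul_eq_mul] using this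
end

section
/- If S is a d×m matrix with linearly independent columns and G is symmetric positive definite, then D = S (Sᵀ G S)⁻¹ Sᵀ satisfies G⁻¹ − D is positive semidefinite, and (G⁻¹ − D) G S = 0, i.e., the columns of GS lie in the null space of the Bayesian PLS posterior covariance. -/
open Matrix

theorem stmt_15 {d m : ℕ} (G : Matrix (Fin d) (Fin d) ℝ) (hG : G.PosDef)
    (hGsymm : G.IsSymm) (S : Matrix (Fin d) (Fin m) ℝ) (hS : S.rank = m)
    (D : Matrix (Fin d) (Fin d) ℝ) (hD : D = S * (Sᵀ * G * S)⁻¹ * Sᵀ) :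
    (G⁻¹ - D).PosSemidef ∧ (G⁻¹ - D) * (G * S) = 0 := by
  -- S has injective mulVec
  have hinj : Function.Injective S.mulVecLin := by
    rw [← LinearMap.ker_eq_bot, ← Submodule.finrank_eq_zero (R := ℝ)]
    have h1 := LinearMap.finrank_range_add_finrank_ker S.mulVecLin
    have : Module.finrank ℝ (LinearMap.range S.mulVecLin) = m := hS
    simp [Module.finrank_pi] at h1
    omega
  -- SᵀGS pos def
  have hM : (Sᵀ * G * S).PosDef := by
    rw [posDef_iff_dotProduct_mulVec]
    constructor
    · have : (Sᵀ * G * S).IsHermitian := by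
        have := hG.posSemidef.conjTranspose_mul_mul_same S
        simpa using this.1
      exact this
    · intro x hx
      have hSx : S.mulVec x ≠ 0 := fun h => hx (by
        have := hinj (a₁ := x) (a₂ := 0) (by simpa using h)
        simpa using this)
      have e : star x ⬝ᵥ (Sᵀ * G * S) *ᵥ x = (S *ᵥ x) ᵥ* (G * S) ⬝ᵥ x := by
        rw [star_trivial, dotProduct_mulVec, Matrix.mul_assoc, ← Matrix.vecMul_vecMul, Matrix.vecMul_transpose]
      rw [e]
      have := hG.dotProduct_mulVec_pos hSx
      simpa [star_trivial, mul_assoc, mulVec_mulVec, dotProduct_mulVec, vecMul_transpose] using this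
  have hGdet : IsUnit G.det := isUnit_iff_ne_zero.mpr hG.det_pos.ne'
  have hMdet : IsUnit (Sᵀ * G * S).det := isUnit_iff_ne_zero.mpr hM.det_pos.ne'
  haveI := (Sᵀ * G * S).invertibleOfIsUnitDet hMdet
  have hGinv : G⁻¹ * G = 1 := Matrix.nonsing_inv_mul G hGdet
  have hGinvT : (G⁻¹)ᵀ = G⁻¹ := by
    rw [Matrix.transpose_nonsing_inv, hGsymm.eq]
  constructor
  · have hB : (fromCols S G⁻¹)ᴴ * G * fromCols S G⁻¹ =
        fromBlocks (Sᵀ * G * S) Sᵀ ((Sᵀ)ᴴ) G⁻¹ := by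
      rw [conjTranspose_fromCols_eq_fromRows_conjTranspose, fromRows_mul,
        fromRows_mul_fromCols]
      rw [fromBlocks_inj]
      refine ⟨rfl, ?_, ?_, ?_⟩
      · rw [conjTranspose_eq_transpose_of_trivial,
          Matrix.mul_nonsing_inv_cancel_right _ _ hGdet]
      · rw [conjTranspose_eq_transpose_of_trivial, conjTranspose_eq_transpose_of_trivial,
          transpose_transpose, hGinvT, Matrix.mul_assoc,
          Matrix.nonsing_inv_mul_cancel_left _ _ hGdet]
      · rw [conjTranspose_eq_transpose_of_trivial, hGinvT,
          Matrix.mul_nonsing_inv_cancel_right _ _ hGdet]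
    have hPSD : (fromBlocks (Sᵀ * G * S) Sᵀ ((Sᵀ)ᴴ) G⁻¹).PosSemidef := by
      rw [← hB]
      exact hG.posSemidef.conjTranspose_mul_mul_same _
    have := (PosDef.fromBlocks₁₁ Sᵀ G⁻¹ hM).mp hPSD
    rw [hD]
    simpa [conjTranspose_eq_transpose_of_trivial, transpose_transpose] using this
  · rw [hD, Matrix.sub_mul, ← Matrix.mul_assoc G⁻¹, hGinv, Matrix.one_mul,
      Matrix.mul_assoc (S * (Sᵀ * G * S)⁻¹), ← Matrix.mul_assoc Sᵀ G S,
      Matrix.mul_assoc S, Matrix.nonsing_inv_mul _ hMdet, Matrix.mul_one, sub_self]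
end

section
/- The Bayesian PLS posterior covariance G⁻¹ − S(SᵀGS)⁻¹Sᵀ has rank d − m when S is d×m of rank m and G is symmetric positive definite. -/
open Matrix

lemma aux_rank_add_le {k l : Type*} [Fintype k] [Fintype l] (A B : Matrix k l ℝ) :
    (A + B).rank ≤ A.rank + B.rank := by
  rw [Matrix.rank, Matrix.rank, Matrix.rank, Matrix.mulVecLin_add]
  have hle : LinearMap.range (A.mulVecLin + B.mulVecLin) ≤
      LinearMap.range A.mulVecLin ⊔ LinearMap.range B.mulVecLin := by
    rintro x ⟨y, rfl⟩
    exact Submodule.add_mem_sup ⟨y, rfl⟩ ⟨y, rfl⟩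
  exact (Submodule.finrank_mono hle).trans
    (Submodule.finrank_add_le_finrank_add_finrank _ _)

theorem stmt_16 {d m : ℕ} (G : Matrix (Fin d) (Fin d) ℝ) (hG : G.PosDef)
    (hGsymm : G.IsSymm) (S : Matrix (Fin d) (Fin m) ℝ) (hS : S.rank = m)
    (hm : m ≤ d) :
    (G⁻¹ - S * (Sᵀ * G * S)⁻¹ * Sᵀ).rank = d - m := by
  classical
  -- injectivity of mulVec of S
  have hker : LinearMap.ker S.mulVecLin = ⊥ := by
    have h := S.mulVecLin.finrank_range_add_finrank_ker
    rw [Module.finrank_fintype_fun_eq_card, Fintype.card_fin] at h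
    have hrk : Module.finrank ℝ (LinearMap.range S.mulVecLin) = m := hS
    have h0 : Module.finrank ℝ (LinearMap.ker S.mulVecLin) = 0 := by omega
    exact Submodule.finrank_eq_zero.mp h0
  have hSv : ∀ x : Fin m → ℝ, x ≠ 0 → S *ᵥ x ≠ 0 := by
    intro x hx hc
    exact hx (LinearMap.ker_eq_bot.mp hker (by simpa [Matrix.mulVecLin_apply] using hc))
  -- A := Sᵀ * G * S is positive definite
  set A : Matrix (Fin m) (Fin m) ℝ := Sᵀ * G * S with hAdef
  have hA : A.PosDef := by
    refine Matrix.posDef_iff_dotProduct_mulVec.mpr ⟨?_, ?_⟩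
    · have := Matrix.isHermitian_conjTranspose_mul_mul S hG.1
      simpa [hAdef] using this
    · intro x hx
      have : star x ⬝ᵥ A *ᵥ x = star (S *ᵥ x) ⬝ᵥ G *ᵥ (S *ᵥ x) := by
        simp [hAdef, Matrix.mulVec_mulVec, Matrix.dotProduct_mulVec,
          Matrix.vecMul_transpose, star_trivial, ← Matrix.mulVec_mulVec]
      rw [this]
      exact hG.dotProduct_mulVec_pos (hSv x hx)
  have hAunit : IsUnit A.det := isUnit_iff_ne_zero.mpr hA.det_pos.ne'
  have hAinv : IsUnit (A⁻¹).det := isUnit_iff_ne_zero.mpr hA.inv.det_pos.ne'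
  have hGunit : IsUnit G.det := isUnit_iff_ne_zero.mpr hG.det_pos.ne'
  have hGinv : IsUnit (G⁻¹).det := isUnit_iff_ne_zero.mpr hG.inv.det_pos.ne'
  have hAA : A⁻¹ * A = 1 := Matrix.nonsing_inv_mul A hAunit
  have hGG : G⁻¹ * G = 1 := Matrix.nonsing_inv_mul G hGunit
  -- Q is the idempotent G S A⁻¹ Sᵀ
  set Q : Matrix (Fin d) (Fin d) ℝ := G * S * A⁻¹ * Sᵀ with hQdef
  have hC : G⁻¹ - S * A⁻¹ * Sᵀ = G⁻¹ * (1 - Q) := by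
    rw [Matrix.mul_sub, mul_one, hQdef]
    congr 1
    have h : G⁻¹ * (G * S * A⁻¹ * Sᵀ) = (G⁻¹ * G) * (S * (A⁻¹ * Sᵀ)) := by
      simp only [Matrix.mul_assoc]
    rw [h, hGG, Matrix.one_mul, ← Matrix.mul_assoc]
  have hQidem : Q * Q = Q := by
    have : Q * Q = G * S * (A⁻¹ * (Sᵀ * G * S) * A⁻¹) * Sᵀ := by
      rw [hQdef]; simp only [Matrix.mul_assoc]
    rw [this, ← hAdef, hAA, one_mul]
  -- rank of Q is m
  have hrankQ : Q.rank = m := by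
    have hle : Q.rank ≤ m := by
      have h1 : Q.rank ≤ Sᵀ.rank := by
        have : Q = (G * S * A⁻¹) * Sᵀ := by rw [hQdef]
        rw [this]
        exact Matrix.rank_mul_le_right _ _
      rwa [Matrix.rank_transpose, hS] at h1
    have hge : m ≤ Q.rank := by
      have key : (A⁻¹ * Sᵀ) * Q = A⁻¹ * Sᵀ := by
        have : (A⁻¹ * Sᵀ) * Q = A⁻¹ * (Sᵀ * G * S) * A⁻¹ * Sᵀ := by
          rw [hQdef]; simp only [Matrix.mul_assoc]
        rw [this, ← hAdef, hAA, one_mul]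
      have h1 : (A⁻¹ * Sᵀ).rank ≤ Q.rank := by
        rw [← key]; exact Matrix.rank_mul_le_right _ _
      rwa [Matrix.rank_mul_eq_right_of_isUnit_det A⁻¹ Sᵀ hAinv,
        Matrix.rank_transpose, hS] at h1
    omega
  -- rank (1 - Q) = d - m
  have hsum_le : Q.rank + (1 - Q).rank ≤ d := by
    have hmul0 : Q * (1 - Q) = 0 := by
      rw [Matrix.mul_sub, mul_one, hQidem, sub_self]
    have := Matrix.rank_add_rank_le_card_of_mul_eq_zero hmul0
    rwa [Fintype.card_fin] at this
  have hsum_ge : d ≤ (1 - Q).rank + Q.rank := by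
    have h1 : ((1 - Q) + Q).rank ≤ (1 - Q).rank + Q.rank := aux_rank_add_le _ _
    rwa [sub_add_cancel, Matrix.rank_one, Fintype.card_fin] at h1
  have h1Q : (1 - Q).rank = d - m := by omega
  rw [hC, Matrix.rank_mul_eq_right_of_isUnit_det G⁻¹ (1 - Q) hGinv, h1Q]
end

section
/- For the Gauss-Seidel iteration on a symmetric positive definite matrix G = L + U (L the lower triangular part, U the strict upper triangular part), with v* = G⁻¹b and iterates v_m = −L⁻¹U v_{m−1} + L⁻¹b from v₀ = 0, we have v_m → v* as m → ∞. -/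
open Matrix Filter

private lemma gs_dot_symm {d : ℕ} (G : Matrix (Fin d) (Fin d) ℝ) (hGsymm : G.IsSymm)
    (x y : Fin d → ℝ) : x ⬝ᵥ G.mulVec y = y ⬝ᵥ G.mulVec x := by
  rw [Matrix.dotProduct_mulVec, ← Matrix.mulVec_transpose, hGsymm.eq, dotProduct_comm]

theorem stmt_18 {d : ℕ} (G L U : Matrix (Fin d) (Fin d) ℝ)
    (hG : G.PosDef) (hGsymm : G.IsSymm)
    (hL : ∀ i j : Fin d, L i j = if j ≤ i then G i j else 0)
    (hU : U = G - L)
    (b : Fin d → ℝ)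
    (v : ℕ → Fin d → ℝ) (hv0 : v 0 = 0)
    (hvrec : ∀ m : ℕ, v (m + 1) = (-(L⁻¹ * U)).mulVec (v m) + L⁻¹.mulVec b) :
    Tendsto v atTop (nhds (G⁻¹.mulVec b)) := by
  classical
  rcases Nat.eq_zero_or_pos d with hd0 | hd
  · subst hd0
    have hv : v = fun _ => G⁻¹.mulVec b := funext fun n => funext fun i => i.elim0
    rw [hv]; exact tendsto_const_nhds
  haveI : Nonempty (Fin d) := ⟨⟨0, hd⟩⟩
  set M : Matrix (Fin d) (Fin d) ℝ := -(L⁻¹ * U) with hM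
  set vs : Fin d → ℝ := G⁻¹.mulVec b with hvs
  set f : (Fin d → ℝ) → ℝ := fun x => x ⬝ᵥ G.mulVec x with hf
  have hGL : G = L + U := by rw [hU]; abel
  have hGs : ∀ a c : Fin d, G a c = G c a := fun a c => hGsymm.apply c a
  -- positivity of the quadratic form
  have hfpos : ∀ z : Fin d → ℝ, z ≠ 0 → 0 < f z := by
    intro z hz
    have := hG.dotProduct_mulVec_pos hz
    simpa [hf] using this
  have hf0 : f 0 = 0 := by simp [hf]
  have hfnn : ∀ z : Fin d → ℝ, 0 ≤ f z := by
    intro z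
    rcases eq_or_ne z 0 with rfl | hz
    · simp [hf0]
    · exact (hfpos z hz).le
  -- L is invertible
  have hdiag : ∀ i, 0 < G i i := by
    intro i
    have hne : (Pi.single i 1 : Fin d → ℝ) ≠ 0 := by
      intro h
      have := congrFun h i
      simp at this
    have := hG.dotProduct_mulVec_pos hne
    simpa [single_dotProduct, Matrix.mulVec_single] using this
  have hlow : ∀ i j : Fin d, i < j → L i j = 0 := by
    intro i j hij; rw [hL]; exact if_neg (not_le.mpr hij)
  have hLdet : IsUnit L.det := by
    rw [Matrix.det_of_lowerTriangular L hlow]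
    have hLd : ∀ i : Fin d, L i i = G i i := fun i => by rw [hL]; exact if_pos le_rfl
    refine isUnit_iff_ne_zero.mpr (ne_of_gt (Finset.prod_pos fun i _ => ?_))
    rw [hLd i]; exact hdiag i
  have hLLinv : L * L⁻¹ = 1 := Matrix.mul_nonsing_inv L hLdet
  have hLinvL : L⁻¹ * L = 1 := Matrix.nonsing_inv_mul L hLdet
  have hLM : ∀ x : Fin d → ℝ, L.mulVec (M.mulVec x) = -(U.mulVec x) := by
    intro x
    rw [hM, Matrix.neg_mulVec, Matrix.mulVec_neg, Matrix.mulVec_mulVec, ← Matrix.mul_assoc,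
      hLLinv, Matrix.one_mul]
  -- the diagonal identity L - Uᵀ = diagonal of G
  have hD : L - Uᵀ = Matrix.diagonal (fun i => G i i) := by
    ext i j
    simp only [Matrix.sub_apply, Matrix.transpose_apply, Matrix.diagonal_apply, hU, hL]
    rcases lt_trichotomy i j with h | h | h
    · rw [if_neg h.ne, if_neg (not_le.mpr h), if_pos h.le]; ring
    · subst h; simp
    · rw [if_neg (Ne.symm h.ne), if_pos h.le, if_neg (not_le.mpr h), hGs i j]; ring
  -- strict decrease of the quadratic form along the iteration matrix
  have hdec : ∀ x : Fin d → ℝ, x ≠ 0 → f (M.mulVec x) < f x := by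
    intro x hx
    set y := M.mulVec x with hy
    have hLy : L.mulVec y = -(U.mulVec x) := hLM x
    set w := x - y with hw
    have hLw : L.mulVec w = G.mulVec x := by
      rw [hw, Matrix.mulVec_sub, hLy, sub_neg_eq_add, hGL, Matrix.add_mulVec]
    have hGy : G.mulVec y = -(U.mulVec w) := by
      rw [hGL, Matrix.add_mulVec, hLy, hw, Matrix.mulVec_sub]; abel
    have hwne : w ≠ 0 := by
      intro h0
      have hxy : x = y := by
        have hxy0 : x - y = 0 := by rw [← hw]; exact h0
        exact sub_eq_zero.mp hxy0
      have hLx : L.mulVec x = -(U.mulVec x) := by rw [← hxy] at hLy; exact hLy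
      have hGx0 : G.mulVec x = 0 := by
        rw [hGL, Matrix.add_mulVec, hLx]; abel
      have hfx0 : f x = 0 := by simp [hf, hGx0]
      exact absurd hfx0 (ne_of_gt (hfpos x hx))
    have hUw : w ⬝ᵥ U.mulVec w = w ⬝ᵥ Uᵀ.mulVec w := by
      rw [Matrix.dotProduct_mulVec, ← Matrix.mulVec_transpose, dotProduct_comm]
    have hdiff : f x - f y = w ⬝ᵥ ((Matrix.diagonal fun i => G i i).mulVec w) := by
      have h1 : f x - f y = w ⬝ᵥ (G.mulVec x + G.mulVec y) := by
        simp only [hf]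
        rw [hw, sub_dotProduct, dotProduct_add, dotProduct_add,
          gs_dot_symm G hGsymm x y]
        ring
      rw [h1, ← hLw, hGy, ← hD, Matrix.sub_mulVec, dotProduct_add,
        dotProduct_sub, dotProduct_neg, hUw]
      ring
    have hpos : 0 < w ⬝ᵥ ((Matrix.diagonal fun i => G i i).mulVec w) := by
      obtain ⟨i0, hi0⟩ : ∃ i, w i ≠ 0 := by
        by_contra h; push_neg at h; exact hwne (funext h)
      have hsum : w ⬝ᵥ ((Matrix.diagonal fun i => G i i).mulVec w) = ∑ i, G i i * (w i) ^ 2 := by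
        simp only [dotProduct, Matrix.mulVec_diagonal]
        exact Finset.sum_congr rfl fun i _ => by ring
      rw [hsum]
      exact Finset.sum_pos' (fun i _ => mul_nonneg (hdiag i).le (sq_nonneg _))
        ⟨i0, Finset.mem_univ _, mul_pos (hdiag i0) (pow_two_pos_of_ne_zero hi0)⟩
    linarith
  -- the quadratic form is continuous
  have hfc : Continuous f := by
    rw [hf]
    exact continuous_id.dotProduct (continuous_const.matrix_mulVec continuous_id)
  have hMc : Continuous fun x : Fin d → ℝ => f (M.mulVec x) :=
    hfc.comp (continuous_const.matrix_mulVec continuous_id)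
  -- scaling
  have hscale : ∀ (t : ℝ) (z : Fin d → ℝ), f (t • z) = t ^ 2 * f z := by
    intro t z
    simp only [hf, Matrix.mulVec_smul, smul_dotProduct, dotProduct_smul,
      smul_eq_mul]
    ring
  -- extrema on the unit sphere
  set S := Metric.sphere (0 : Fin d → ℝ) 1 with hS
  have hScomp : IsCompact S := isCompact_sphere 0 1
  have hSne : S.Nonempty := NormedSpace.sphere_nonempty.mpr zero_le_one
  have hSne0 : ∀ z ∈ S, z ≠ (0 : Fin d → ℝ) := by
    intro z hz h0
    rw [hS, h0] at hz
    simp at hz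
  obtain ⟨xc, hxcS, hxc'⟩ := hScomp.exists_isMinOn hSne hfc.continuousOn
  have hxc := isMinOn_iff.mp hxc'
  obtain ⟨xC, hxCS, hxC'⟩ := hScomp.exists_isMaxOn hSne hfc.continuousOn
  have hxC := isMaxOn_iff.mp hxC'
  obtain ⟨xe, hxeS, hxe'⟩ :=
    hScomp.exists_isMinOn hSne (hfc.sub hMc).continuousOn
  have hxe := isMinOn_iff.mp hxe'
  set c := f xc with hc
  set Cm := f xC with hCm
  set ε := f xe - f (M.mulVec xe) with hε
  have hcpos : 0 < c := hfpos xc (hSne0 xc hxcS)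
  have hεpos : 0 < ε := sub_pos.mpr (hdec xe (hSne0 xe hxeS))
  have hεC : ε ≤ Cm := by
    have h1 : f xe ≤ Cm := hxC xe hxeS
    have h2 : 0 ≤ f (M.mulVec xe) := hfnn _
    rw [hε]; linarith
  have hCpos : 0 < Cm := lt_of_lt_of_le hεpos hεC
  obtain ⟨r, hr⟩ : ∃ r : ℝ, r = 1 - ε / Cm := ⟨_, rfl⟩
  have hr0 : 0 ≤ r := by
    have : ε / Cm ≤ 1 := (div_le_one hCpos).mpr hεC
    rw [hr]; linarith
  have hr1 : r < 1 := by
    have : 0 < ε / Cm := div_pos hεpos hCpos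
    rw [hr]; linarith
  have hunit : ∀ z : Fin d → ℝ, z ≠ 0 → (‖z‖⁻¹ • z) ∈ S := by
    intro z hz
    rw [hS, Metric.mem_sphere, dist_zero_right, norm_smul, norm_inv, norm_norm]
    exact inv_mul_cancel₀ (norm_ne_zero_iff.mpr hz)
  -- uniform contraction
  have hcontract : ∀ z : Fin d → ℝ, f (M.mulVec z) ≤ r * f z := by
    intro z
    rcases eq_or_ne z 0 with rfl | hz
    · simp [hf0, Matrix.mulVec_zero]
    · have hnz : (0 : ℝ) < ‖z‖ := norm_pos_iff.mpr hz
      set u := ‖z‖⁻¹ • z with hu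
      have huS : u ∈ S := hunit z hz
      have h1 : ε ≤ f u - f (M.mulVec u) := hxe u huS
      have h2 : f u ≤ Cm := hxC u huS
      have h4 : ε / Cm * f u ≤ ε := by
        rw [div_mul_eq_mul_div, div_le_iff₀ hCpos]
        exact mul_le_mul_of_nonneg_left h2 hεpos.le
      have h3 : f (M.mulVec u) ≤ r * f u := by
        have hru : r * f u = f u - ε / Cm * f u := by rw [hr]; ring
        linarith [h1, h4, hru]
      have hzu : z = ‖z‖ • u := by
        rw [hu, smul_smul, mul_inv_cancel₀ hnz.ne', one_smul]
      have hmul := mul_le_mul_of_nonneg_left h3 (sq_nonneg ‖z‖)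
      have hfMz : f (M.mulVec z) = ‖z‖ ^ 2 * f (M.mulVec u) := by
        conv_lhs => rw [hzu]
        rw [Matrix.mulVec_smul]
        exact hscale _ _
      have hfz : f z = ‖z‖ ^ 2 * f u := by
        conv_lhs => rw [hzu]
        exact hscale _ _
      calc f (M.mulVec z) = ‖z‖ ^ 2 * f (M.mulVec u) := hfMz
        _ ≤ ‖z‖ ^ 2 * (r * f u) := hmul
        _ = r * (‖z‖ ^ 2 * f u) := by ring
        _ = r * f z := by rw [hfz]
  -- lower bound for the quadratic form
  have hlow2 : ∀ z : Fin d → ℝ, c * ‖z‖ ^ 2 ≤ f z := by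
    intro z
    rcases eq_or_ne z 0 with rfl | hz
    · simp [hf0]
    · have hnz : (0 : ℝ) < ‖z‖ := norm_pos_iff.mpr hz
      have h1 : c ≤ f (‖z‖⁻¹ • z) := hxc _ (hunit z hz)
      rw [hscale] at h1
      have h2 := mul_le_mul_of_nonneg_right h1 (sq_nonneg ‖z‖)
      have h3 : ‖z‖⁻¹ ^ 2 * f z * ‖z‖ ^ 2 = f z := by
        field_simp
      linarith
  -- the fixed point
  have hGdet : IsUnit G.det := hG.det_pos.ne'.isUnit
  have hGvs : G.mulVec vs = b := by
    rw [hvs, Matrix.mulVec_mulVec, Matrix.mul_nonsing_inv G hGdet, Matrix.one_mulVec]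
  have hfix : M.mulVec vs + L⁻¹.mulVec b = vs := by
    have h8 : L.mulVec (M.mulVec vs + L⁻¹.mulVec b) = L.mulVec vs := by
      rw [Matrix.mulVec_add, hLM, Matrix.mulVec_mulVec b L L⁻¹, hLLinv, Matrix.one_mulVec,
        ← hGvs, hGL, Matrix.add_mulVec]
      abel
    have h9 := congrArg (fun z => L⁻¹.mulVec z) h8
    simpa [Matrix.mulVec_mulVec, hLinvL, Matrix.one_mulVec] using h9
  -- error sequence
  set e : ℕ → Fin d → ℝ := fun m => v m - vs with he
  have herec : ∀ m, e (m + 1) = M.mulVec (e m) := by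
    intro m
    simp only [he]
    rw [hvrec m, Matrix.mulVec_sub]
    conv_lhs => rw [← hfix]
    abel
  have hbound : ∀ m, f (e m) ≤ r ^ m * f (e 0) := by
    intro m
    induction m with
    | zero => simp
    | succ n ih =>
        rw [herec n]
        calc f (M.mulVec (e n)) ≤ r * f (e n) := hcontract _
          _ ≤ r * (r ^ n * f (e 0)) := mul_le_mul_of_nonneg_left ih hr0
          _ = r ^ (n + 1) * f (e 0) := by ring
  have hfe0 : Tendsto (fun m => f (e m)) atTop (nhds 0) := by
    have hgeo : Tendsto (fun m : ℕ => r ^ m * f (e 0)) atTop (nhds 0) := by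
      have := (tendsto_pow_atTop_nhds_zero_of_lt_one hr0 hr1).mul_const (f (e 0))
      simpa using this
    exact squeeze_zero (fun m => hfnn _) hbound hgeo
  have hne0 : Tendsto (fun m => ‖e m‖) atTop (nhds 0) := by
    have hsq : Tendsto (fun m => ‖e m‖ ^ 2) atTop (nhds 0) := by
      have h10 : Tendsto (fun m => c⁻¹ * f (e m)) atTop (nhds 0) := by
        simpa using hfe0.const_mul c⁻¹
      refine squeeze_zero (fun m => sq_nonneg _) (fun m => ?_) h10
      have h11 := hlow2 (e m)
      calc ‖e m‖ ^ 2 = c⁻¹ * (c * ‖e m‖ ^ 2) := by field_simp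
        _ ≤ c⁻¹ * f (e m) := mul_le_mul_of_nonneg_left h11 (inv_nonneg.mpr hcpos.le)
    have hsqrt : Tendsto (fun m => Real.sqrt (‖e m‖ ^ 2)) atTop (nhds (Real.sqrt 0)) :=
      (Real.continuous_sqrt.tendsto 0).comp hsq
    simpa [Real.sqrt_sq (norm_nonneg _)] using hsqrt
  have he0 : Tendsto e atTop (nhds 0) := tendsto_zero_iff_norm_tendsto_zero.mpr hne0
  have hveq : v = fun m => e m + vs := funext fun m => by simp [he]
  rw [hveq]
  simpa using he0.add (tendsto_const_nhds (x := vs))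
end
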